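/- Let σ > 0, r > 0 and a ∈ (0, 1], and set x* = (r² − 2σ²·ln a)/(2r). Then 2·TV_a( N(0, σ²), N(r, σ²) ) = 2Φ(x*/σ) − 1 + a·(1 − 2Φ((x* − r)/σ)), where Φ is the cumulative distribution function of the standard normal distribution. -/

import Mathlib

open MeasureTheory Real

/-- `TV_a(X, Y) = (1/2) ∫ |f(x) − a·g(x)| dx` for densities `f, g` on `ℝ`. -/
noncomputable def TVa (a : ℝ) (f g : ℝ → ℝ) : ℝ :=
  (1 / 2) * ∫ x, |f x - a * g x|

/-- Density of the one-dimensional Gaussian `N(u, σ²)` on `ℝ`. -/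
noncomputable def gauss1 (σ u : ℝ) (x : ℝ) : ℝ :=
  (2 * Real.pi * σ ^ 2) ^ (-(1 : ℝ) / 2) * Real.exp (-(x - u) ^ 2 / (2 * σ ^ 2))

/-- The standard normal cumulative distribution function `Φ`. -/
noncomputable def stdNormalCDF (x : ℝ) : ℝ :=
  ∫ t in Set.Iic x, (Real.sqrt (2 * Real.pi))⁻¹ * Real.exp (-t ^ 2 / 2)

noncomputable def stdPhi (y : ℝ) : ℝ := (Real.sqrt (2 * Real.pi))⁻¹ * Real.exp (-y ^ 2 / 2)

lemma gauss1_eq {σ : ℝ} (hσ : 0 < σ) (u x : ℝ) :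
    gauss1 σ u x = σ⁻¹ * stdPhi ((x - u) / σ) := by
  have h2π : (0:ℝ) < 2 * π := by positivity
  have hc : (2 * π * σ ^ 2) ^ (-(1 : ℝ) / 2) = σ⁻¹ * (Real.sqrt (2 * π))⁻¹ := by
    rw [show (-(1:ℝ)/2) = -(1/2) by norm_num, Real.rpow_neg (by positivity),
      ← Real.sqrt_eq_rpow, Real.sqrt_mul h2π.le, Real.sqrt_sq hσ.le, mul_inv, mul_comm]
  rw [gauss1, hc, stdPhi, mul_assoc,
    show -((x - u) / σ) ^ 2 / 2 = -(x - u) ^ 2 / (2 * σ ^ 2) from by rw [div_pow]; ring]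

lemma integrable_stdPhi : Integrable stdPhi := by
  have : Integrable (fun y : ℝ => Real.exp (-(1/2) * y ^ 2)) := integrable_exp_neg_mul_sq (by norm_num)
  have := this.const_mul (Real.sqrt (2 * π))⁻¹
  refine this.congr (Filter.Eventually.of_forall fun y => ?_)
  show (Real.sqrt (2 * π))⁻¹ * Real.exp (-(1/2) * y ^ 2) = stdPhi y
  rw [stdPhi, show -(1/2 : ℝ) * y ^ 2 = -y ^ 2 / 2 from by ring]

lemma integrable_gauss1 {σ : ℝ} (hσ : 0 < σ) (u : ℝ) : Integrable (gauss1 σ u) := by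
  have h : Integrable (fun x : ℝ => Real.exp (-(1/(2*σ^2)) * x ^ 2)) :=
    integrable_exp_neg_mul_sq (by positivity)
  have h2 := (h.comp_sub_right u).const_mul ((2 * π * σ ^ 2) ^ (-(1 : ℝ) / 2))
  refine h2.congr (Filter.Eventually.of_forall fun x => ?_)
  show (2 * π * σ ^ 2) ^ (-(1:ℝ)/2) * Real.exp (-(1/(2*σ^2)) * (x - u) ^ 2) = gauss1 σ u x
  rw [gauss1, show -(1/(2*σ^2)) * (x - u) ^ 2 = -(x - u) ^ 2 / (2 * σ ^ 2) from by ring]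

lemma integral_gauss1 {σ : ℝ} (hσ : 0 < σ) (u : ℝ) : ∫ x, gauss1 σ u x = 1 := by
  have hb : (0:ℝ) < 1/(2*σ^2) := by positivity
  have h1 : ∀ x : ℝ, gauss1 σ u x
      = (2 * π * σ ^ 2) ^ (-(1 : ℝ) / 2) * Real.exp (-(1/(2*σ^2)) * (x - u) ^ 2) := by
    intro x; unfold gauss1; congr 2; field_simp
  simp_rw [h1]
  rw [integral_const_mul, integral_sub_right_eq_self (fun x => Real.exp (-(1/(2*σ^2)) * x ^ 2)) u,
    integral_gaussian]
  have : π / (1/(2*σ^2)) = 2 * π * σ ^ 2 := by field_simp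
  rw [this, Real.sqrt_eq_rpow, ← Real.rpow_add (by positivity)]
  norm_num

lemma setIntegral_gauss1_Iic {σ : ℝ} (hσ : 0 < σ) (u t : ℝ) :
    ∫ x in Set.Iic t, gauss1 σ u x = stdNormalCDF ((t - u) / σ) := by
  have key : ∫ x in Set.Iic t, stdPhi ((x - u) / σ) = σ * ∫ y in Set.Iic ((t-u)/σ), stdPhi y := by
    have hind : ∀ x : ℝ, (Set.Iic t).indicator (fun x => stdPhi ((x - u) / σ)) x
        = (Set.Iic ((t-u)/σ)).indicator stdPhi (σ⁻¹ * (x - u)) := by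
      intro x
      have hmem : x ∈ Set.Iic t ↔ σ⁻¹ * (x - u) ∈ Set.Iic ((t-u)/σ) := by
        simp only [Set.mem_Iic]
        rw [div_eq_inv_mul, mul_le_mul_iff_right₀ (by positivity)]
        constructor <;> intro h <;> linarith
      by_cases hx : x ∈ Set.Iic t
      · rw [Set.indicator_of_mem hx, Set.indicator_of_mem (hmem.mp hx)]
        rw [div_eq_inv_mul]
      · rw [Set.indicator_of_notMem hx, Set.indicator_of_notMem (fun h => hx (hmem.mpr h))]
    rw [← integral_indicator measurableSet_Iic]
    simp_rw [hind]
    rw [integral_sub_right_eq_self (fun x => (Set.Iic ((t-u)/σ)).indicator stdPhi (σ⁻¹ * x)) u,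
      Measure.integral_comp_mul_left (fun x => (Set.Iic ((t-u)/σ)).indicator stdPhi x) σ⁻¹,
      integral_indicator measurableSet_Iic]
    rw [inv_inv, abs_of_pos hσ, smul_eq_mul]
  calc ∫ x in Set.Iic t, gauss1 σ u x
      = ∫ x in Set.Iic t, σ⁻¹ * stdPhi ((x - u) / σ) := by
        exact setIntegral_congr_fun measurableSet_Iic fun x _ => gauss1_eq hσ u x
    _ = σ⁻¹ * ∫ x in Set.Iic t, stdPhi ((x - u) / σ) := integral_const_mul _ _
    _ = σ⁻¹ * (σ * ∫ y in Set.Iic ((t-u)/σ), stdPhi y) := by rw [key]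
    _ = stdNormalCDF ((t - u) / σ) := by
        rw [← mul_assoc, inv_mul_cancel₀ hσ.ne', one_mul]; rfl

lemma sign_le {σ r a : ℝ} (hσ : 0 < σ) (hr : 0 < r) (ha : 0 < a) {x : ℝ}
    (hx : x ≤ (r ^ 2 - 2 * σ ^ 2 * Real.log a) / (2 * r)) :
    a * gauss1 σ r x ≤ gauss1 σ 0 x := by
  have hc : (0:ℝ) < (2 * π * σ ^ 2) ^ (-(1:ℝ)/2) := by positivity
  have h2 : (0:ℝ) < 2 * σ ^ 2 := by positivity
  have h1 : 2 * r * x ≤ r ^ 2 - 2 * σ ^ 2 * Real.log a := by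
    rw [le_div_iff₀ (by positivity)] at hx; linarith
  unfold gauss1
  rw [mul_left_comm]
  apply mul_le_mul_of_nonneg_left _ hc.le
  rw [← Real.exp_log ha, ← Real.exp_add, Real.exp_le_exp]
  have e1 : Real.log a + -(x - r) ^ 2 / (2 * σ ^ 2)
      = (2 * σ ^ 2 * Real.log a + -(x - r) ^ 2) / (2 * σ ^ 2) := by field_simp
  rw [e1, div_le_div_iff₀ h2 h2]
  nlinarith [h1, sq_nonneg σ]

lemma sign_ge {σ r a : ℝ} (hσ : 0 < σ) (hr : 0 < r) (ha : 0 < a) {x : ℝ}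
    (hx : (r ^ 2 - 2 * σ ^ 2 * Real.log a) / (2 * r) ≤ x) :
    gauss1 σ 0 x ≤ a * gauss1 σ r x := by
  have hc : (0:ℝ) < (2 * π * σ ^ 2) ^ (-(1:ℝ)/2) := by positivity
  have h2 : (0:ℝ) < 2 * σ ^ 2 := by positivity
  have h1 : r ^ 2 - 2 * σ ^ 2 * Real.log a ≤ 2 * r * x := by
    rw [div_le_iff₀ (by positivity)] at hx; linarith
  unfold gauss1
  rw [mul_left_comm]
  apply mul_le_mul_of_nonneg_left _ hc.le
  rw [← Real.exp_log ha, ← Real.exp_add, Real.exp_le_exp]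
  have e1 : Real.log a + -(x - r) ^ 2 / (2 * σ ^ 2)
      = (2 * σ ^ 2 * Real.log a + -(x - r) ^ 2) / (2 * σ ^ 2) := by field_simp
  rw [e1, div_le_div_iff₀ h2 h2]
  nlinarith [h1, sq_nonneg σ]

/-- Closed form for `TV_a` between one-dimensional Gaussians: with
`x* = (r² − 2σ²·ln a)/(2r)`,
`2·TV_a(N(0, σ²), N(r, σ²)) = 2Φ(x*/σ) − 1 + a·(1 − 2Φ((x* − r)/σ))`. -/
theorem tva_gauss_closed_form (σ r a : ℝ) (hσ : 0 < σ) (hr : 0 < r)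
    (ha : a ∈ Set.Ioc (0 : ℝ) 1) :
    2 * TVa a (gauss1 σ 0) (gauss1 σ r)
      = 2 * stdNormalCDF ((r ^ 2 - 2 * σ ^ 2 * Real.log a) / (2 * r) / σ) - 1
        + a * (1 - 2 * stdNormalCDF (((r ^ 2 - 2 * σ ^ 2 * Real.log a) / (2 * r) - r) / σ)) := by
  obtain ⟨ha0, ha1⟩ := ha
  set xs := (r ^ 2 - 2 * σ ^ 2 * Real.log a) / (2 * r) with hxs
  have hintf : Integrable (gauss1 σ 0) := integrable_gauss1 hσ 0
  have hintg : Integrable (gauss1 σ r) := integrable_gauss1 hσ r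
  have hinth : Integrable (fun x => gauss1 σ 0 x - a * gauss1 σ r x) :=
    hintf.sub (hintg.const_mul a)
  -- total integral of h
  have htot : ∫ x, (gauss1 σ 0 x - a * gauss1 σ r x) = 1 - a := by
    rw [integral_sub hintf (hintg.const_mul a), integral_const_mul,
      integral_gauss1 hσ, integral_gauss1 hσ, mul_one]
  -- integral of h on Iic xs
  have hIic : ∫ x in Set.Iic xs, (gauss1 σ 0 x - a * gauss1 σ r x)
      = stdNormalCDF (xs / σ) - a * stdNormalCDF ((xs - r) / σ) := by
    rw [integral_sub hintf.integrableOn ((hintg.const_mul a).integrableOn),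
      integral_const_mul, setIntegral_gauss1_Iic hσ, setIntegral_gauss1_Iic hσ, sub_zero]
  -- splitting
  have hsplit : (∫ x in Set.Iic xs, (gauss1 σ 0 x - a * gauss1 σ r x))
      + (∫ x in Set.Ioi xs, (gauss1 σ 0 x - a * gauss1 σ r x))
      = ∫ x, (gauss1 σ 0 x - a * gauss1 σ r x) :=
    intervalIntegral.integral_Iic_add_Ioi hinth.integrableOn hinth.integrableOn
  have hsplitabs : (∫ x in Set.Iic xs, |gauss1 σ 0 x - a * gauss1 σ r x|)
      + (∫ x in Set.Ioi xs, |gauss1 σ 0 x - a * gauss1 σ r x|)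
      = ∫ x, |gauss1 σ 0 x - a * gauss1 σ r x| :=
    intervalIntegral.integral_Iic_add_Ioi hinth.abs.integrableOn hinth.abs.integrableOn
  have habs1 : ∫ x in Set.Iic xs, |gauss1 σ 0 x - a * gauss1 σ r x|
      = ∫ x in Set.Iic xs, (gauss1 σ 0 x - a * gauss1 σ r x) := by
    refine setIntegral_congr_fun measurableSet_Iic fun x hx => ?_
    exact abs_of_nonneg (sub_nonneg.mpr (sign_le hσ hr ha0 hx))
  have habs2 : ∫ x in Set.Ioi xs, |gauss1 σ 0 x - a * gauss1 σ r x|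
      = - ∫ x in Set.Ioi xs, (gauss1 σ 0 x - a * gauss1 σ r x) := by
    rw [← integral_neg]
    refine setIntegral_congr_fun measurableSet_Ioi fun x hx => ?_
    rw [abs_of_nonpos (sub_nonpos.mpr (sign_ge hσ hr ha0 (le_of_lt hx)))]
  have : TVa a (gauss1 σ 0) (gauss1 σ r)
      = (1/2) * ∫ x, |gauss1 σ 0 x - a * gauss1 σ r x| := rfl
  rw [this]
  have hfin : ∫ x, |gauss1 σ 0 x - a * gauss1 σ r x|
      = 2 * (stdNormalCDF (xs / σ) - a * stdNormalCDF ((xs - r) / σ)) - (1 - a) := by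
    have hIoi : ∫ x in Set.Ioi xs, (gauss1 σ 0 x - a * gauss1 σ r x)
        = (1 - a) - (stdNormalCDF (xs / σ) - a * stdNormalCDF ((xs - r) / σ)) := by
      rw [← htot, ← hsplit, hIic]; ring
    linarith [hsplitabs, habs1, habs2, hIic, hIoi]
  rw [hfin]
  ring
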